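/- Let A be a finite set, let A^r be the right zero semigroup on A (with ab = b), and consider the Cayley graph of (A^r)^I rooted at the identity. Then the transition semigroup of the McCammond expansion of this rooted Cayley graph is a finite band (every element is idempotent). -/

import Mathlib

/-- The state set of the McCammond expansion of the Cayley graph of the right
zero semigroup on `A` (rooted at the adjoined identity `1`): simple paths from
`1` correspond exactly to distinct-letter words over `A`. -/
abbrev RZState (A : Type) := {l : List A // l.Nodup}

/-- The action of a letter `a` on a simple path (distinct-letter word) `s` in
the McCammond expansion of the Cayley graph of the right zero semigroup: if
`a` has not yet been visited the path is extended by `a`; otherwise the path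
is truncated to its initial segment ending at the vertex `a`. -/
def rzStep {A : Type} [DecidableEq A] (a : A) (s : RZState A) : RZState A :=
  if h : a ∈ s.1 then
    ⟨s.1.take (s.1.idxOf a + 1), (List.take_sublist _ _).nodup s.2⟩
  else
    ⟨s.1 ++ [a], by
      rw [List.nodup_append]
      exact ⟨s.2, List.nodup_singleton a, by simp; rintro x hx rfl; exact h hx⟩⟩

/-- The transformation of the state set induced by the word `w ∈ A*`, reading
letters from left to right. -/
def rzAct {A : Type} [DecidableEq A] (w : List A) (s : RZState A) : RZState A :=
  w.foldl (fun t a => rzStep a t) s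

section RZHelpers
set_option linter.unusedSectionVars false
variable {A : Type} [DecidableEq A]


def rstep (a : A) (l : List A) : List A :=
  if a ∈ l then l.take (l.idxOf a + 1) else l ++ [a]

def ract (w : List A) (l : List A) : List A := w.foldl (fun t a => rstep a t) l

lemma rstep_pop {a : A} {z r : List A} (hz : a ∉ z) :
    rstep a (z ++ a :: r) = z ++ [a] := by
  have hm : a ∈ z ++ a :: r := by simp
  rw [rstep, if_pos hm, List.idxOf_append_of_notMem hz, List.idxOf_cons_self,
    List.take_append]
  simp

lemma rstep_push {a : A} {l : List A} (h : a ∉ l) : rstep a l = l ++ [a] := by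
  rw [rstep, if_neg h]

lemma rstep_nodup {a : A} {l : List A} (h : l.Nodup) : (rstep a l).Nodup := by
  rw [rstep]
  split
  · exact (List.take_sublist _ _).nodup h
  · rw [List.nodup_append]
    exact ⟨h, List.nodup_singleton a, by simp; rintro x hx hxa; exact ‹a ∉ l› (hxa ▸ hx)⟩

lemma ract_nil (l : List A) : ract [] l = l := rfl

lemma ract_cons (a : A) (w : List A) (l : List A) : ract (a :: w) l = ract w (rstep a l) := rfl

lemma ract_concat (w : List A) (b : A) (l : List A) :
    ract (w ++ [b]) l = rstep b (ract w l) := by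
  simp [ract, List.foldl_append]

lemma ract_append (w v : List A) (l : List A) :
    ract (w ++ v) l = ract v (ract w l) := by
  simp [ract, List.foldl_append]

lemma ract_nodup {l : List A} (w : List A) (h : l.Nodup) : (ract w l).Nodup := by
  induction w generalizing l with
  | nil => exact h
  | cons a w ih => exact ih (rstep_nodup h)

lemma mem_rstep {x a : A} {l : List A} (h : x ∈ rstep a l) : x ∈ l ∨ x = a := by
  rw [rstep] at h
  split at h
  · exact Or.inl ((List.take_sublist _ _).mem h)
  · rcases List.mem_append.1 h with h | h
    · exact Or.inl h
    · simp at h; exact Or.inr h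

lemma mem_ract {x : A} {w l : List A} (h : x ∈ ract w l) : x ∈ l ∨ x ∈ w := by
  induction w generalizing l with
  | nil => exact Or.inl h
  | cons a w ih =>
    rcases ih (l := rstep a l) h with h' | h'
    · rcases mem_rstep h' with h'' | h''
      · exact Or.inl h''
      · exact Or.inr (by simp [h''])
    · exact Or.inr (List.mem_cons_of_mem _ h')

lemma nodup_split {l : List A} (h : l.Nodup) {a : A} (ha : a ∈ l) :
    ∃ z r, l = z ++ a :: r ∧ a ∉ z ∧ a ∉ r := by
  obtain ⟨z, r, rfl⟩ := List.append_of_mem ha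
  rw [List.nodup_append] at h
  refine ⟨z, r, rfl, fun hz => h.2.2 a hz a (by simp) rfl, by
    have := h.2.1; simp [List.nodup_cons] at this; exact this.1⟩

lemma inertia_step {a : A} {p l : List A} (hp : a ∉ p) (hl : l.Nodup) :
    rstep a (p ++ l) = p ++ rstep a l := by
  by_cases h : a ∈ l
  · obtain ⟨z, r, rfl, hz, _⟩ := nodup_split hl h
    rw [← List.append_assoc, rstep_pop (by simp [hp, hz]), rstep_pop hz, List.append_assoc]
  · rw [rstep_push h, rstep_push (by simp [hp, h]), List.append_assoc]

lemma inertia {w : List A} {p l : List A} (hp : ∀ x ∈ w, x ∉ p) (hl : l.Nodup) :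
    ract w (p ++ l) = p ++ ract w l := by
  induction w generalizing l with
  | nil => rfl
  | cons a w ih =>
    rw [ract_cons, ract_cons, inertia_step (hp a (by simp)) hl]
    exact ih (fun x hx => hp x (by simp [hx])) (rstep_nodup hl)

lemma BL (w : List A) (b : A) (l : List A) (hl : l.Nodup) :
    ∃ p q : List A, ract (w ++ [b]) l = p ++ q ++ [b] ∧ ∀ x ∈ p, x ∉ w ++ [b] := by
  induction w using List.reverseRecOn generalizing b with
  | nil =>
    rw [List.nil_append, ract]
    simp only [List.foldl_cons, List.foldl_nil]
    by_cases h : b ∈ l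
    · obtain ⟨z, r, rfl, hz, _⟩ := nodup_split hl h
      exact ⟨z, [], by simpa using rstep_pop hz, fun x hx hm => hz ((by simpa using hm : x = b) ▸ hx)⟩
    · exact ⟨l, [], by simpa using rstep_push h, fun x hx hm => h ((by simpa using hm : x = b) ▸ hx)⟩
  | append_singleton w₀ c ih =>
    obtain ⟨p, q, heq, hav⟩ := ih c
    have hW : (p ++ q ++ [c]).Nodup := heq ▸ ract_nodup _ hl
    rw [ract_concat, heq]
    simp only [List.append_assoc] at hW
    have hpn : p.Nodup := (List.nodup_append.1 hW).1
    have hqn : q.Nodup := (List.nodup_append.1 ((List.nodup_append.1 hW).2.1)).1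
    by_cases hbp : b ∈ p
    · obtain ⟨p₁, p₂, rfl, hp₁, _⟩ := nodup_split hpn hbp
      rw [List.append_assoc, List.append_assoc, List.cons_append, rstep_pop hp₁]
      refine ⟨p₁, [], by simp, fun x hx hm => ?_⟩
      rcases List.mem_append.1 hm with h | h
      · exact hav x (by simp [hx]) h
      · exact hp₁ ((by simpa using h : x = b) ▸ hx)
    · by_cases hbq : b ∈ q
      · obtain ⟨q₁, q₂, rfl, hq₁, _⟩ := nodup_split hqn hbq
        have hre : p ++ (q₁ ++ b :: q₂) ++ [c] = (p ++ q₁) ++ b :: (q₂ ++ [c]) := by simp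
        rw [hre, rstep_pop (by simp [hbp, hq₁])]
        refine ⟨p, q₁, by simp, fun x hx hm => ?_⟩
        rcases List.mem_append.1 hm with h | h
        · exact hav x hx h
        · exact hbp ((by simpa using h : x = b) ▸ hx)
      · by_cases hbc : b = c
        · subst hbc
          have hbpq : b ∉ p ++ q := by simp [hbp, hbq]
          have hre : p ++ q ++ [b] = (p ++ q) ++ b :: ([] : List A) := by simp
          rw [hre, rstep_pop hbpq]
          refine ⟨p, q, by simp, fun x hx hm => ?_⟩
          rcases List.mem_append.1 hm with h | h
          · exact hav x hx h
          · exact hav x hx (List.mem_append.2 (Or.inr (by simpa using h)))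
        · have hb : b ∉ p ++ q ++ [c] := by simp [hbp, hbq, hbc]
          rw [rstep_push hb]
          refine ⟨p, q ++ [c], by simp, fun x hx hm => ?_⟩
          rcases List.mem_append.1 hm with h | h
          · exact hav x hx h
          · exact hbp ((by simpa using h : x = b) ▸ hx)

/-- Coupling relation: two states agreeing outside disjoint middles. -/
def RelC (c u v : List A) : Prop :=
  u = v ∨ ∃ e f d, u = c ++ e ++ d ∧ v = c ++ f ++ d ∧ ∀ x ∈ e, x ∉ f

lemma rel_refl (c u : List A) : RelC c u u := Or.inl rfl

lemma rel_step {c u v : List A} (hu : u.Nodup) (hv : v.Nodup) (h : RelC c u v) (a : A) :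
    RelC c (rstep a u) (rstep a v) := by
  rcases h with rfl | ⟨e, f, d, rfl, rfl, hef⟩
  · exact Or.inl rfl
  have hu' := hu; have hv' := hv
  simp only [List.append_assoc, List.nodup_append] at hu' hv'
  obtain ⟨hc, ⟨he, hd, hed⟩, hced⟩ := hu'
  obtain ⟨-, ⟨hf, -, hfd⟩, hcfd⟩ := hv'
  by_cases hac : a ∈ c
  · obtain ⟨c₁, c₂, rfl, hc₁, -⟩ := nodup_split hc hac
    have e1 : c₁ ++ a :: c₂ ++ e ++ d = c₁ ++ a :: (c₂ ++ e ++ d) := by simp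
    have e2 : c₁ ++ a :: c₂ ++ f ++ d = c₁ ++ a :: (c₂ ++ f ++ d) := by simp
    rw [e1, e2, rstep_pop hc₁, rstep_pop hc₁]
    exact Or.inl rfl
  · by_cases hae : a ∈ e
    · obtain ⟨e₁, e₂, rfl, he₁, -⟩ := nodup_split he hae
      have hav : a ∉ c ++ f ++ d := by
        simp only [List.mem_append, not_or]
        exact ⟨⟨hac, fun hf' => hef a (by simp) hf'⟩,
          fun hd' => hed a (by simp) a hd' rfl⟩
      have e1 : c ++ (e₁ ++ a :: e₂) ++ d = (c ++ e₁) ++ a :: (e₂ ++ d) := by simp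
      rw [e1, rstep_pop (by simp [hac, he₁]), rstep_push hav]
      refine Or.inr ⟨e₁, f ++ d, [a], by simp, by simp, fun x hx => ?_⟩
      simp only [List.mem_append, not_or]
      exact ⟨hef x (by simp [hx]), fun hd' => hed x (by simp [hx]) x hd' rfl⟩
    · by_cases haf : a ∈ f
      · obtain ⟨f₁, f₂, rfl, hf₁, -⟩ := nodup_split hf haf
        have hav : a ∉ c ++ e ++ d := by
          simp only [List.mem_append, not_or]
          exact ⟨⟨hac, hae⟩, fun hd' => hfd a (by simp) a hd' rfl⟩
        have e2 : c ++ (f₁ ++ a :: f₂) ++ d = (c ++ f₁) ++ a :: (f₂ ++ d) := by simp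
        rw [e2, rstep_pop (by simp [hac, hf₁]), rstep_push hav]
        refine Or.inr ⟨e ++ d, f₁, [a], by simp, by simp, fun x hx => ?_⟩
        rcases List.mem_append.1 hx with hx' | hx'
        · exact fun hf' => hef x hx' (by simp [hf'])
        · exact fun hf' => hfd x (by simp [hf']) x hx' rfl
      · by_cases had : a ∈ d
        · obtain ⟨d₁, d₂, rfl, hd₁, -⟩ := nodup_split hd had
          have e1 : c ++ e ++ (d₁ ++ a :: d₂) = (c ++ e ++ d₁) ++ a :: d₂ := by simp
          have e2 : c ++ f ++ (d₁ ++ a :: d₂) = (c ++ f ++ d₁) ++ a :: d₂ := by simp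
          have hnu : a ∉ c ++ e ++ d₁ := by
            simp only [List.mem_append, not_or]
            exact ⟨⟨hac, hae⟩, hd₁⟩
          have hnv : a ∉ c ++ f ++ d₁ := by
            simp only [List.mem_append, not_or]
            exact ⟨⟨hac, haf⟩, hd₁⟩
          rw [e1, e2, rstep_pop hnu, rstep_pop hnv]
          exact Or.inr ⟨e, f, d₁ ++ [a], by simp, by simp, hef⟩
        · have hnu : a ∉ c ++ e ++ d := by simp [hac, hae, had]
          have hnv : a ∉ c ++ f ++ d := by simp [hac, haf, had]
          rw [rstep_push hnu, rstep_push hnv]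
          exact Or.inr ⟨e, f, d ++ [a], by simp, by simp, hef⟩

lemma rel_act {c u v : List A} (w : List A) (hu : u.Nodup) (hv : v.Nodup) (h : RelC c u v) :
    RelC c (ract w u) (ract w v) := by
  induction w generalizing u v with
  | nil => exact h
  | cons a w ih =>
    rw [ract_cons, ract_cons]
    exact ih (rstep_nodup hu) (rstep_nodup hv) (rel_step hu hv h a)

lemma rel_pop {c u v : List A} (hc : c.Nodup) (h : RelC c u v) {b : A} (hb : b ∈ c) :
    rstep b u = rstep b v := by
  rcases h with rfl | ⟨e, f, d, rfl, rfl, -⟩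
  · rfl
  obtain ⟨c₁, c₂, rfl, hc₁, -⟩ := nodup_split hc hb
  have e1 : c₁ ++ b :: c₂ ++ e ++ d = c₁ ++ b :: (c₂ ++ e ++ d) := by simp
  have e2 : c₁ ++ b :: c₂ ++ f ++ d = c₁ ++ b :: (c₂ ++ f ++ d) := by simp
  rw [e1, e2, rstep_pop hc₁, rstep_pop hc₁]

lemma key (w : List A) (b : A) {t : List A} (ht : t.Nodup)
    (hfix : ract (w ++ [b]) t = t) (a : A) :
    ract ((w ++ [b]) ++ [a]) (rstep a t) = rstep a t := by
  obtain ⟨p, q, heq, hpav⟩ := BL w b t ht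
  rw [hfix] at heq
  -- t = p ++ Q with Q = q ++ [b]
  set Q : List A := q ++ [b] with hQdef
  have hteq : t = p ++ Q := by rw [heq]; simp [hQdef]
  have hWav : ∀ x ∈ w ++ [b], x ∉ p := fun x hx hxp => hpav x hxp hx
  have hQn : Q.Nodup := by
    have := hteq ▸ ht
    exact (List.nodup_append.1 this).2.1
  have hpn : p.Nodup := by
    have := hteq ▸ ht
    exact (List.nodup_append.1 this).1
  have hpQdisj : ∀ x ∈ p, x ∉ Q := by
    have := hteq ▸ ht
    exact fun x hx hxQ => (List.nodup_append.1 this).2.2 x hx x hxQ rfl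
  have hQfix : ract (w ++ [b]) Q = Q := by
    have h1 : ract (w ++ [b]) (p ++ Q) = p ++ ract (w ++ [b]) Q := inertia hWav hQn
    rw [← hteq, hfix, hteq] at h1
    exact (List.append_cancel_left h1.symm)
  have hbQ : b ∈ Q := by simp [hQdef]
  rw [ract_concat]
  by_cases hap : a ∈ p
  · obtain ⟨p₁, p₂, rfl, hp₁, -⟩ := nodup_split hpn hap
    have e1 : t = p₁ ++ a :: (p₂ ++ Q) := by rw [hteq]; simp
    rw [e1, rstep_pop hp₁]
    have hav : ∀ x ∈ w ++ [b], x ∉ p₁ ++ [a] := by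
      intro x hx hmem
      rcases List.mem_append.1 hmem with h' | h'
      · exact hWav x hx (by simp [h'])
      · have hxa : x = a := by simpa using h'
        subst hxa
        exact hWav x hx (by simp)
    have h2 : ract (w ++ [b]) (p₁ ++ [a]) = (p₁ ++ [a]) ++ ract (w ++ [b]) [] := by
      have := inertia (p := p₁ ++ [a]) (l := []) hav List.nodup_nil
      simpa using this
    rw [h2]
    have e2 : (p₁ ++ [a]) ++ ract (w ++ [b]) [] = p₁ ++ a :: ract (w ++ [b]) [] := by simp
    rw [e2, rstep_pop hp₁]
  · by_cases haQ : a ∈ Q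
    · obtain ⟨Q₁, Q₂, hQsplit, hQ₁, -⟩ := nodup_split hQn haQ
      have e1 : t = (p ++ Q₁) ++ a :: Q₂ := by rw [hteq, hQsplit]; simp
      have hapQ₁ : a ∉ p ++ Q₁ := by simp [hap, hQ₁]
      rw [e1, rstep_pop hapQ₁]
      have hq'n : (Q₁ ++ [a]).Nodup := by
        have : (Q₁ ++ a :: Q₂).Nodup := hQsplit ▸ hQn
        simp only [List.nodup_append, List.nodup_cons] at this
        refine List.nodup_append.2 ⟨this.1, List.nodup_singleton a, ?_⟩
        intro x hx
        simp only [List.mem_singleton]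
        rintro _ rfl rfl; exact hQ₁ hx
      have hrel : RelC (Q₁ ++ [a]) (Q₁ ++ [a]) Q :=
        Or.inr ⟨[], Q₂, [], by simp, by rw [hQsplit]; simp, by simp⟩
      have hrel2 := rel_act (w ++ [b]) hq'n hQn hrel
      rw [hQfix] at hrel2
      have e3 : p ++ Q₁ ++ [a] = p ++ (Q₁ ++ [a]) := by simp
      rw [e3, inertia hWav hq'n]
      rcases hrel2 with heq2 | ⟨e', f', d', heq2, -, -⟩
      · rw [heq2, hQsplit]
        have e4 : p ++ (Q₁ ++ a :: Q₂) = (p ++ Q₁) ++ a :: Q₂ := by simp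
        rw [e4, rstep_pop hapQ₁]
        simp
      · rw [heq2]
        have e5 : p ++ ((Q₁ ++ [a]) ++ e' ++ d') = (p ++ Q₁) ++ a :: (e' ++ d') := by simp
        rw [e5, rstep_pop hapQ₁]
        simp
    · have hat : a ∉ t := by rw [hteq]; simp [hap, haQ]
      rw [rstep_push hat]
      have hQan : (Q ++ [a]).Nodup := by
        refine List.nodup_append.2 ⟨hQn, List.nodup_singleton a, ?_⟩
        intro x hx
        simp only [List.mem_singleton]
        rintro _ rfl rfl; exact haQ hx
      have hrel : RelC Q (Q ++ [a]) Q :=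
        Or.inr ⟨[a], [], [], by simp, by simp, by simp⟩
      have hrel2 := rel_act w hQan hQn hrel
      have h3 : ract (w ++ [b]) (Q ++ [a]) = Q := by
        rw [ract_concat] at hQfix ⊢
        rw [rel_pop hQn hrel2 hbQ, hQfix]
      have e6 : t ++ [a] = p ++ (Q ++ [a]) := by rw [hteq]; simp
      rw [e6, inertia hWav hQan, h3, ← hteq, rstep_push hat]
      exact e6

lemma rstep_idem {a : A} {l : List A} (hl : l.Nodup) : rstep a (rstep a l) = rstep a l := by
  by_cases h : a ∈ l
  · obtain ⟨z, r, rfl, hz, -⟩ := nodup_split hl h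
    rw [rstep_pop hz]
    have : z ++ [a] = z ++ a :: ([] : List A) := by simp
    rw [this, rstep_pop hz]
  · rw [rstep_push h]
    have : l ++ [a] = l ++ a :: ([] : List A) := by simp
    rw [this, rstep_pop h]

lemma ract_idem (w : List A) (l : List A) (hl : l.Nodup) (hw : w ≠ []) :
    ract w (ract w l) = ract w l := by
  induction w using List.reverseRecOn generalizing l with
  | nil => exact absurd rfl hw
  | append_singleton w₀ b ih =>
    rcases List.eq_nil_or_concat w₀ with rfl | ⟨w₁, c, rfl⟩
    · rw [List.nil_append]
      have hr : ∀ x : List A, ract [b] x = rstep b x := fun _ => rfl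
      simp only [hr]
      exact rstep_idem hl
    · simp only [List.concat_eq_append] at ih hw ⊢
      have ht₀ : (ract (w₁ ++ [c]) l).Nodup := ract_nodup _ hl
      have hfix : ract (w₁ ++ [c]) (ract (w₁ ++ [c]) l) = ract (w₁ ++ [c]) l :=
        ih _ hl (by simp)
      have hkey := key w₁ c ht₀ hfix b
      rw [ract_concat (w₁ ++ [c]) b l]
      exact hkey

lemma rzStep_val (a : A) (s : RZState A) : (rzStep a s).1 = rstep a s.1 := by
  by_cases h : a ∈ s.1 <;> simp [rzStep, rstep, h]

lemma rzAct_val (w : List A) (s : RZState A) : (rzAct w s).1 = ract w s.1 := by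
  induction w generalizing s with
  | nil => rfl
  | cons a w ih =>
    show (rzAct w (rzStep a s)).1 = ract w (rstep a s.1)
    rw [ih, rzStep_val]

end RZHelpers

/-- The transition semigroup of the McCammond expansion of the Cayley graph of
the right zero semigroup on a finite set `A` is a finite band: the set of
transformations induced by nonempty words is finite, and each such
transformation is idempotent. -/
theorem rz_mc_transition_semigroup_is_finite_band
    (A : Type) [DecidableEq A] [Fintype A] :
    Set.Finite {f : RZState A → RZState A |
        ∃ w : List A, w ≠ [] ∧ f = rzAct w} ∧
      ∀ w : List A, w ≠ [] → ∀ s : RZState A,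
        rzAct w (rzAct w s) = rzAct w s := by
  constructor
  · exact Set.toFinite _
  · intro w hw s
    apply Subtype.ext
    rw [rzAct_val, rzAct_val]
    exact ract_idem w s.1 s.2 hw
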